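/- arXiv:2508.03568 — 2 statements merged into one kernel-verified Lean document; each statement's English description precedes it below -/
import Mathlib

section
/- The map D : Λ → Λ is surjective: for every g ∈ Λ there exists f ∈ Λ with D f = g. -/
open MvPolynomial

/-- The ring of symmetric functions in the power-sum model:
`Λ = ℚ[p₁, p₂, …]` with the variable indexed by `n : ℕ+` being the power sum `pₙ`. -/
abbrev Λ : Type := MvPolynomial ℕ+ ℚ

/-- `Dₙ = n · ∂/∂pₙ`. -/
noncomputable def Dn (n : ℕ+) : Λ →ₗ[ℚ] Λ :=
  (n : ℚ) • (pderiv n : Derivation ℚ Λ Λ).toLinearMap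

/-- `D = Σₙ Dₙ` (on each polynomial only finitely many `Dₙ` are nonzero). -/
noncomputable def D (f : Λ) : Λ := ∑ᶠ n : ℕ+, Dn n f

/-- The weight `|λ| = Σₙ n·(λ n)` of a power-sum monomial exponent. -/
def wt (l : ℕ+ →₀ ℕ) : ℕ := l.sum fun n k => (n : ℕ) * k

/-- `f` is homogeneous of degree `d` if every monomial in its support has weight `d`. -/
def IsHomog (d : ℕ) (f : Λ) : Prop := ∀ l ∈ f.support, wt l = d

/-- `z_λ = Πₙ n^{λ n} · (λ n)!`. -/
noncomputable def zlam (l : ℕ+ →₀ ℕ) : ℚ :=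
  l.prod fun n k => (n : ℚ) ^ k * (Nat.factorial k : ℚ)

/-- The Hall inner product: the unique bilinear form with `⟨p_λ, p_μ⟩ = δ_{λμ} z_λ`. -/
noncomputable def hall (f g : Λ) : ℚ := ∑ l ∈ f.support, f.coeff l * g.coeff l * zlam l

lemma Dn_apply (n : ℕ+) (f : Λ) : Dn n f = (n : ℚ) • pderiv n f := rfl

lemma Dn_support (f : Λ) : (Function.support fun n => Dn n f) ⊆ ↑f.vars := by
  intro n hn
  by_contra h
  exact hn (by simp [Dn_apply, pderiv_eq_zero_of_notMem_vars (by simpa using h)])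

lemma Dn_support_finite (f : Λ) : (Function.support fun n => Dn n f).Finite :=
  Set.Finite.subset f.vars.finite_toSet (Dn_support f)

lemma D_eq_sum (f : Λ) : D f = ∑ n ∈ f.vars, Dn n f :=
  finsum_eq_sum_of_support_subset _ (Dn_support f)

lemma D_add (f g : Λ) : D (f + g) = D f + D g := by
  unfold D
  calc ∑ᶠ n : ℕ+, Dn n (f + g) = ∑ᶠ n : ℕ+, (Dn n f + Dn n g) := by
        apply finsum_congr; intro n; rw [map_add]
    _ = (∑ᶠ n : ℕ+, Dn n f) + ∑ᶠ n : ℕ+, Dn n g :=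
        finsum_add_distrib (Dn_support_finite f) (Dn_support_finite g)

lemma D_mul (f g : Λ) : D (f * g) = D f * g + f * D g := by
  have h1 : ∀ n : ℕ+, Dn n (f * g) = Dn n f * g + f * Dn n g := by
    intro n
    simp only [Dn_apply]
    rw [show pderiv n (f * g) = pderiv n f * g + f * pderiv n g from pderiv_mul]
    rw [smul_add, smul_mul_assoc, mul_smul_comm]
  have hf := Dn_support_finite f
  have hg := Dn_support_finite g
  calc D (f * g) = ∑ᶠ n : ℕ+, (Dn n f * g + f * Dn n g) := finsum_congr h1
    _ = (∑ᶠ n : ℕ+, Dn n f * g) + ∑ᶠ n : ℕ+, f * Dn n g := by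
        apply finsum_add_distrib
        · exact hf.subset (by
            intro n hn; simp only [Function.mem_support] at *
            exact fun h => hn (by simp [h]))
        · exact hg.subset (by
            intro n hn; simp only [Function.mem_support] at *
            exact fun h => hn (by simp [h]))
    _ = D f * g + f * D g := by
        rw [← finsum_mul _ _, ← mul_finsum _ _]; rfl

lemma D_const (c : ℚ) : D (C c : Λ) = 0 := by
  unfold D
  apply finsum_eq_zero_of_forall_eq_zero
  intro n
  simp [Dn_apply, pderiv_C]

lemma D_C_mul (c : ℚ) (f : Λ) : D (C c * f) = C c * D f := by
  rw [D_mul, D_const]; simp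

lemma D_X1 : D (X 1 : Λ) = 1 := by
  unfold D
  rw [finsum_eq_single _ (1 : ℕ+)]
  · simp [Dn_apply]
  · intro n hn
    simp [Dn_apply, pderiv_X_of_ne (Ne.symm hn)]

lemma D_pow (k : ℕ) : D ((X 1 : Λ) ^ (k + 1)) = C ((k : ℚ) + 1) * (X 1 : Λ) ^ k := by
  induction k with
  | zero => simpa using D_X1
  | succ k ih =>
    rw [pow_succ, D_mul, ih, D_X1, mul_one]
    push_cast [map_add, map_one]
    ring

lemma totalDegree_pderiv_le (i : ℕ+) (f : Λ) (d : ℕ) (h : f.totalDegree ≤ d + 1) :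
    (pderiv i f).totalDegree ≤ d := by
  conv_lhs => rw [f.as_sum]
  rw [map_sum]
  apply totalDegree_finsetSum_le
  intro m hm
  rw [pderiv_monomial]
  rcases Nat.eq_zero_or_pos (m i) with h0 | h0
  · simp [h0]
  · refine le_trans (totalDegree_monomial_le _ _) ?_
    show Finsupp.sum (m - Finsupp.single i 1) (fun _ e => e) ≤ d
    have hle : Finsupp.single i 1 ≤ m := by
      rw [Finsupp.single_le_iff]; exact h0
    have hsum : (m - Finsupp.single i 1).sum (fun _ e => e) + 1 = m.sum (fun _ e => e) := by
      have hc := tsub_add_cancel_of_le hle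
      calc (m - Finsupp.single i 1).sum (fun _ e => e) + 1
          = (m - Finsupp.single i 1).sum (fun _ e => e)
            + (Finsupp.single i 1).sum (fun _ e => e) := by simp
        _ = ((m - Finsupp.single i 1) + Finsupp.single i 1).sum (fun _ e => e) := by
            rw [Finsupp.sum_add_index] <;> simp
        _ = m.sum (fun _ e => e) := by rw [hc]
    have hm' : m.sum (fun _ e => e) ≤ d + 1 := le_trans (le_totalDegree hm) h
    omega

lemma totalDegree_D_le (f : Λ) (d : ℕ) (h : f.totalDegree ≤ d + 1) :
    (D f).totalDegree ≤ d := by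
  rw [D_eq_sum f]
  apply totalDegree_finsetSum_le
  intro n _
  rw [Dn_apply]
  exact (totalDegree_smul_le _ _).trans (totalDegree_pderiv_le n f d h)

lemma D_of_deg_zero (f : Λ) (h : f.totalDegree = 0) : D f = 0 := by
  rw [D_eq_sum f]
  apply Finset.sum_eq_zero
  intro n hn
  obtain ⟨m, hm, hi⟩ := (mem_vars n).mp hn
  have := (totalDegree_eq_zero_iff ℕ+ f).mp h m hm n
  simp [Finsupp.mem_support_iff, this] at hi

lemma D_nilpotent : ∀ (d : ℕ) (g : Λ), g.totalDegree ≤ d → D^[d + 1] g = 0 := by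
  intro d
  induction d with
  | zero =>
    intro g hg
    simpa using D_of_deg_zero g (Nat.le_zero.mp hg)
  | succ d ih =>
    intro g hg
    rw [Function.iterate_succ_apply]
    exact ih (D g) (totalDegree_D_le g d hg)

lemma D_sum {ι : Type*} (s : Finset ι) (F : ι → Λ) :
    D (∑ k ∈ s, F k) = ∑ k ∈ s, D (F k) := by
  classical
  induction s using Finset.induction with
  | empty => simpa using D_const 0
  | insert _ _ hx ih => rw [Finset.sum_insert hx, Finset.sum_insert hx, D_add, ih]

/-- `D : Λ → Λ` is surjective. -/
theorem D_surjective : ∀ g : Λ, ∃ f : Λ, D f = g := by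
  intro g
  set N := g.totalDegree + 1 with hN
  have hnil : D^[N] g = 0 := D_nilpotent g.totalDegree g le_rfl
  set t : ℕ → Λ := fun k => C ((-1 : ℚ) ^ k / (Nat.factorial k : ℚ)) * ((X 1 : Λ) ^ k * D^[k] g)
    with ht
  refine ⟨∑ k ∈ Finset.range N,
    C ((-1 : ℚ) ^ k / (Nat.factorial (k + 1) : ℚ)) * ((X 1 : Λ) ^ (k + 1) * D^[k] g), ?_⟩
  rw [D_sum]
  have hterm : ∀ k : ℕ,
      D (C ((-1 : ℚ) ^ k / (Nat.factorial (k + 1) : ℚ)) * ((X 1 : Λ) ^ (k + 1) * D^[k] g))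
        = t k - t (k + 1) := by
    intro k
    rw [D_C_mul, D_mul, D_pow, ht]
    simp only []
    rw [Function.iterate_succ_apply']
    have hfac : (Nat.factorial (k + 1) : ℚ) = ((k : ℚ) + 1) * (Nat.factorial k : ℚ) := by
      rw [Nat.factorial_succ]; push_cast; ring
    have h1 : (C ((-1 : ℚ) ^ k / (Nat.factorial (k + 1) : ℚ)) : Λ) * C ((k : ℚ) + 1)
        = C ((-1 : ℚ) ^ k / (Nat.factorial k : ℚ)) := by
      rw [← map_mul]
      congr 1
      rw [hfac]
      have h2 : ((k : ℚ) + 1) ≠ 0 := by positivity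
      have h3 : (Nat.factorial k : ℚ) ≠ 0 := Nat.cast_ne_zero.mpr (Nat.factorial_ne_zero k)
      field_simp
    have h4 : (C ((-1 : ℚ) ^ k / (Nat.factorial (k + 1) : ℚ)) : Λ)
        = - C ((-1 : ℚ) ^ (k + 1) / (Nat.factorial (k + 1) : ℚ)) := by
      rw [← map_neg]
      congr 1
      rw [pow_succ]
      ring
    linear_combination ((X 1 : Λ) ^ k * D^[k] g) * h1 + ((X 1 : Λ) ^ (k + 1) * D (D^[k] g)) * h4
  calc ∑ k ∈ Finset.range N,
        D (C ((-1 : ℚ) ^ k / (Nat.factorial (k + 1) : ℚ)) * ((X 1 : Λ) ^ (k + 1) * D^[k] g))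
      = ∑ k ∈ Finset.range N, (t k - t (k + 1)) := by
        apply Finset.sum_congr rfl; intro k _; exact hterm k
    _ = t 0 - t N := Finset.sum_range_sub' t N
    _ = g := by
        rw [ht]
        simp [hnil]
end

section
/- Quasi-isometry for D_s: if f, g ∈ Λ are both homogeneous of degree d, then ⟨D_s f, D_s g⟩_s = d · ⟨f, g⟩. -/
open MvPolynomial

/-- `Λ[1^s, 2^s, …]`: the monoid algebra of the multiplicative monoid `ℕ+` over `Λ`,
with elements the finite sums `Σ_k f_k · k^s`, where `k^s · h^s = (kh)^s`. -/
abbrev ΛS : Type := MonoidAlgebra Λ ℕ+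

/-- `D_s(f) = Σₙ (Dₙ f) · n^s` (only finitely many terms are nonzero). -/
noncomputable def Ds (f : Λ) : ΛS := ∑ᶠ n : ℕ+, MonoidAlgebra.single n (Dn n f)

/-- The generalized Hall product on `Λ[1^s, 2^s, …]`, determined by
`⟨f·h^s, g·k^s⟩_s = δ_{hk} ⟨f, g⟩`. -/
noncomputable def halls (A B : ΛS) : ℚ := ∑ k ∈ A.coeff.support, hall (A.coeff k) (B.coeff k)

/- ## Auxiliary lemmas -/

theorem coeff_pderiv' (n : ℕ+) (f : Λ) (l : ℕ+ →₀ ℕ) :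
    coeff l (pderiv n f) = (l n + 1 : ℚ) * coeff (l + Finsupp.single n 1) f := by
  induction f using MvPolynomial.induction_on' with
  | monomial s a =>
    rw [pderiv_monomial, coeff_monomial, coeff_monomial]
    split_ifs with h1 h2 h2
    · subst h2; simp [mul_comm]
    · have hs : s n = 0 := by
        by_contra hs
        exact h2 (by rw [← h1, tsub_add_cancel_of_le (Finsupp.single_le_iff.2 (Nat.one_le_iff_ne_zero.2 hs))])
      simp [hs]
    · exact absurd (by rw [h2, add_tsub_cancel_right]) h1
    · ring
  | add p q hp hq => simp [hp, hq]; ring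

theorem coeff_Dn (n : ℕ+) (f : Λ) (l : ℕ+ →₀ ℕ) :
    coeff l (Dn n f) = (n : ℚ) * (l n + 1 : ℚ) * coeff (l + Finsupp.single n 1) f := by
  simp only [Dn, LinearMap.smul_apply, Derivation.coeFn_coe, coeff_smul, smul_eq_mul,
    coeff_pderiv']
  ring

theorem zlam_eq_prod (l : ℕ+ →₀ ℕ) (T : Finset ℕ+) (hT : l.support ⊆ T) :
    zlam l = ∏ i ∈ T, ((i : ℚ) ^ (l i) * (Nat.factorial (l i) : ℚ)) := by
  rw [zlam, Finsupp.prod]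
  exact Finset.prod_subset hT (by intro x _ hx; simp [Finsupp.notMem_support_iff.1 hx])

theorem zlam_add_single (n : ℕ+) (l : ℕ+ →₀ ℕ) :
    zlam (l + Finsupp.single n 1) = (n : ℚ) * (l n + 1 : ℚ) * zlam l := by
  classical
  set T : Finset ℕ+ := insert n l.support with hTdef
  have h1 : l.support ⊆ T := Finset.subset_insert _ _
  have h2 : (l + Finsupp.single n 1).support ⊆ T := by
    intro i hi
    rcases Finset.mem_union.1 (Finsupp.support_add hi) with h | h
    · exact h1 h
    · simp only [Finsupp.support_single_ne_zero _ one_ne_zero, Finset.mem_singleton] at h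
      exact h ▸ Finset.mem_insert_self _ _
  rw [zlam_eq_prod _ T h2, zlam_eq_prod _ T h1,
    ← Finset.mul_prod_erase T _ (Finset.mem_insert_self n _),
    ← Finset.mul_prod_erase T _ (Finset.mem_insert_self n _)]
  have key : ∀ i ∈ T.erase n, ((i:ℚ) ^ ((l + Finsupp.single n 1 : ℕ+ →₀ ℕ) i) * (Nat.factorial ((l + Finsupp.single n 1 : ℕ+ →₀ ℕ) i) : ℚ))
      = ((i:ℚ) ^ (l i) * (Nat.factorial (l i) : ℚ)) := by
    intro i hi
    have hin : i ≠ n := Finset.ne_of_mem_erase hi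
    rw [Finsupp.add_apply, Finsupp.single_apply, if_neg hin.symm, add_zero]
  rw [Finset.prod_congr rfl key]
  have : (l + Finsupp.single n 1 : ℕ+ →₀ ℕ) n = l n + 1 := by
    rw [Finsupp.add_apply, Finsupp.single_apply, if_pos rfl]
  rw [this, pow_succ, Nat.factorial_succ]
  push_cast
  ring

/-- the finset of variables appearing in `f` -/
noncomputable def vars' (f : Λ) : Finset ℕ+ := f.support.biUnion fun l => l.support

theorem Dn_eq_zero (n : ℕ+) (f : Λ) (hn : n ∉ vars' f) : Dn n f = 0 := by
  ext l
  rw [coeff_Dn, coeff_zero]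
  have : coeff (l + Finsupp.single n 1) f = 0 := by
    by_contra h
    apply hn
    exact Finset.mem_biUnion.2 ⟨l + Finsupp.single n 1, MvPolynomial.mem_support_iff.2 h,
      by simp [Finsupp.mem_support_iff]⟩
  rw [this, mul_zero]

theorem Ds_apply (f : Λ) (k : ℕ+) : (Ds f).coeff k = Dn k f := by
  classical
  have hsub : (Function.support fun n => (MonoidAlgebra.single n (Dn n f) : ΛS)) ⊆ ↑(vars' f) := by
    intro n hn
    by_contra h
    exact hn (by simp [Dn_eq_zero n f h])
  rw [Ds, finsum_eq_sum_of_support_subset _ hsub]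
  rw [MonoidAlgebra.coeff_sum, Finset.sum_apply']
  rw [Finset.sum_eq_single k]
  · simp [MonoidAlgebra.coeff_single]
  · intro b _ hb; simp [MonoidAlgebra.coeff_single, Finsupp.single_apply, hb]
  · intro hk
    simp only [MonoidAlgebra.coeff_single, Finsupp.single_eq_same]
    exact Dn_eq_zero k f hk

theorem hall_eq_sum (f g : Λ) (T : Finset (ℕ+ →₀ ℕ)) (hT : f.support ⊆ T) :
    hall f g = ∑ l ∈ T, f.coeff l * g.coeff l * zlam l := by
  apply Finset.sum_subset hT
  intro x _ hx
  rw [MvPolynomial.notMem_support_iff.1 hx]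
  ring

theorem sub_add_single (m : ℕ+ →₀ ℕ) (n : ℕ+) (h : m n ≠ 0) :
    m - Finsupp.single n 1 + Finsupp.single n 1 = m :=
  tsub_add_cancel_of_le (Finsupp.single_le_iff.2 (Nat.one_le_iff_ne_zero.2 h))

/-- Key identity for a single `n` -/
theorem hall_Dn (n : ℕ+) (f g : Λ) :
    hall (Dn n f) (Dn n g) =
      ∑ m ∈ f.support, (n : ℚ) * (m n : ℚ) * (f.coeff m * g.coeff m * zlam m) := by
  classical
  set e : ℕ+ →₀ ℕ := Finsupp.single n 1 with he
  have hsupp : (Dn n f).support ⊆ f.support.image (fun m => m - e) := by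
    intro l hl
    have h := MvPolynomial.mem_support_iff.1 hl
    rw [coeff_Dn] at h
    have : coeff (l + e) f ≠ 0 := by intro h0; rw [h0, mul_zero] at h; exact h rfl
    exact Finset.mem_image.2 ⟨l + e, MvPolynomial.mem_support_iff.2 this, by rw [add_tsub_cancel_right]⟩
  rw [hall_eq_sum _ _ _ hsupp]
  rw [← Finset.sum_filter_add_sum_filter_not (f.support.image (fun m => m - e))
    (fun l => coeff (l + e) f ≠ 0), ← Finset.sum_filter_add_sum_filter_not f.support
    (fun m => m n ≠ 0)]
  have hz1 : ∑ l ∈ (f.support.image (fun m => m - e)).filter (fun l => ¬ coeff (l + e) f ≠ 0),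
      (Dn n f).coeff l * (Dn n g).coeff l * zlam l = 0 := by
    apply Finset.sum_eq_zero
    intro l hl
    have := (Finset.mem_filter.1 hl).2
    rw [not_not] at this
    rw [coeff_Dn, this, mul_zero, zero_mul, zero_mul]
  have hz2 : ∑ m ∈ f.support.filter (fun m => ¬ m n ≠ 0),
      (n : ℚ) * (m n : ℚ) * (f.coeff m * g.coeff m * zlam m) = 0 := by
    apply Finset.sum_eq_zero
    intro m hm
    have := (Finset.mem_filter.1 hm).2
    rw [not_not] at this
    rw [this]; push_cast; ring
  rw [hz1, hz2, add_zero, add_zero]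
  apply Finset.sum_bij' (fun l _ => l + e) (fun m _ => m - e)
  · intro l hl
    have h := Finset.mem_filter.1 hl
    refine Finset.mem_filter.2 ⟨MvPolynomial.mem_support_iff.2 h.2, ?_⟩
    simp [he]
  · intro m hm
    have h := Finset.mem_filter.1 hm
    refine Finset.mem_filter.2 ⟨Finset.mem_image.2 ⟨m, h.1, rfl⟩, ?_⟩
    rw [sub_add_single m n h.2]
    exact MvPolynomial.mem_support_iff.1 h.1
  · intro l _; rw [add_tsub_cancel_right]
  · intro m hm; exact sub_add_single m n (Finset.mem_filter.1 hm).2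
  · intro l hl
    rw [coeff_Dn, coeff_Dn, zlam_add_single]
    have : ((l + e) n : ℚ) = (l n : ℚ) + 1 := by simp [he]
    rw [this]
    ring


/-- Quasi-isometry for `D_s`: for `f, g` homogeneous of degree `d`,
`⟨D_s f, D_s g⟩_s = d ⟨f, g⟩`. -/
theorem Ds_quasi_isometry (d : ℕ) (f g : Λ) (hf : IsHomog d f) (hg : IsHomog d g) :
    halls (Ds f) (Ds g) = (d : ℚ) * hall f g := by
  classical
  have hsupp : (Ds f).coeff.support ⊆ vars' f := by
    intro k hk
    by_contra h
    exact Finsupp.mem_support_iff.1 hk (by rw [Ds_apply, Dn_eq_zero k f h])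
  have step1 : halls (Ds f) (Ds g) = ∑ k ∈ vars' f, hall (Dn k f) (Dn k g) := by
    rw [halls]
    rw [Finset.sum_subset hsupp]
    · exact Finset.sum_congr rfl fun k _ => by rw [Ds_apply, Ds_apply]
    · intro k _ hk
      have : (Ds f).coeff k = 0 := Finsupp.notMem_support_iff.1 hk
      rw [this, hall]
      simp
  rw [step1]
  have step2 : ∀ k, hall (Dn k f) (Dn k g) =
      ∑ m ∈ f.support, (k : ℚ) * (m k : ℚ) * (f.coeff m * g.coeff m * zlam m) :=
    fun k => hall_Dn k f g
  calc ∑ k ∈ vars' f, hall (Dn k f) (Dn k g)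
      = ∑ k ∈ vars' f, ∑ m ∈ f.support, (k : ℚ) * (m k : ℚ) * (f.coeff m * g.coeff m * zlam m) := by
        exact Finset.sum_congr rfl fun k _ => step2 k
    _ = ∑ m ∈ f.support, (∑ k ∈ vars' f, (k : ℚ) * (m k : ℚ)) * (f.coeff m * g.coeff m * zlam m) := by
        rw [Finset.sum_comm]
        exact Finset.sum_congr rfl fun m _ => by rw [Finset.sum_mul]
    _ = ∑ m ∈ f.support, (d : ℚ) * (f.coeff m * g.coeff m * zlam m) := by
        apply Finset.sum_congr rfl
        intro m hm
        congr 1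
        have hsub : m.support ⊆ vars' f := Finset.subset_biUnion_of_mem _ hm
        have : ∑ k ∈ vars' f, (k : ℚ) * (m k : ℚ) = ∑ k ∈ m.support, (k : ℚ) * (m k : ℚ) := by
          symm
          apply Finset.sum_subset hsub
          intro k _ hk
          rw [Finsupp.notMem_support_iff.1 hk]; push_cast; ring
        rw [this, ← hf m hm, wt, Finsupp.sum]
        push_cast
        rfl
    _ = (d : ℚ) * hall f g := by rw [hall, Finset.mul_sum]
end
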